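/- For every density matrix ρ it is impossible that both G_X(ρ) = (d − 1)/(d + 1) and G_P(ρ) = (d − 1)/(d + 1); consequently every density matrix satisfies G_XP(ρ) < 2(d − 1)/(d + 1). -/

import Mathlib

open Matrix
open scoped ComplexOrder

noncomputable section

/-- The Lorenz values of `p : Fin d → ℝ`, computed with the sorting permutation `Tuple.sort p`
(they are independent of the choice of sorting permutation):
`L(p, ℓ) = ∑_{k=0}^{ℓ} p (π k)` where `π` arranges the values of `p` in ascending order. -/
def lorenzF {d : ℕ} (p : Fin d → ℝ) (ℓ : Fin d) : ℝ :=
  ∑ k ∈ Finset.Iic ℓ, p (Tuple.sort p k)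

/-- The Gini index of `p : Fin d → ℝ`: `G(p) = 1 − (2/(d+1)) · ∑_{ℓ=0}^{d−1} L(p, ℓ)`. -/
def giniF {d : ℕ} (p : Fin d → ℝ) : ℝ :=
  1 - (2 / ((d : ℝ) + 1)) * ∑ ℓ : Fin d, lorenzF p ℓ

/-- The Gini index of a function `p : ZMod d → ℝ`, obtained by reindexing along the
bijection `Fin d → ZMod d`, `k ↦ (k : ZMod d)`. -/
def gini {d : ℕ} [NeZero d] (p : ZMod d → ℝ) : ℝ :=
  giniF (fun k : Fin d => p ((k : ℕ) : ZMod d))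

/-- A density matrix: positive semidefinite with trace 1. -/
def IsDensityMatrix {d : ℕ} [NeZero d] (ρ : Matrix (ZMod d) (ZMod d) ℂ) : Prop :=
  ρ.PosSemidef ∧ ρ.trace = 1

/-- The position distribution of `ρ`: `P_X(ρ) r = Re(ρ r r)`. -/
def PX {d : ℕ} [NeZero d] (ρ : Matrix (ZMod d) (ZMod d) ℂ) : ZMod d → ℝ :=
  fun r => (ρ r r).re

/-- `ω = exp(2πi/d)`. -/
def omega (d : ℕ) : ℂ := Complex.exp (2 * Real.pi * Complex.I / d)

/-- The Fourier matrix `F r s = ω^{(r·s).val} / √d`. -/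
def Fmat (d : ℕ) [NeZero d] : Matrix (ZMod d) (ZMod d) ℂ :=
  Matrix.of fun r s : ZMod d => omega d ^ (r * s).val / (Real.sqrt d : ℂ)

/-- The momentum distribution of `ρ`: `P_P(ρ) r = Re((Fᴴ ρ F) r r)`. -/
def PP {d : ℕ} [NeZero d] (ρ : Matrix (ZMod d) (ZMod d) ℂ) : ZMod d → ℝ :=
  fun r => (((Fmat d)ᴴ * ρ * Fmat d) r r).re

/-- `G_X(ρ) = G(P_X(ρ))`. -/
def GX {d : ℕ} [NeZero d] (ρ : Matrix (ZMod d) (ZMod d) ℂ) : ℝ := gini (PX ρ)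

/-- `G_P(ρ) = G(P_P(ρ))`. -/
def GP {d : ℕ} [NeZero d] (ρ : Matrix (ZMod d) (ZMod d) ℂ) : ℝ := gini (PP ρ)

/-- `G_XP(ρ) = G_X(ρ) + G_P(ρ)`. -/
def GXP {d : ℕ} [NeZero d] (ρ : Matrix (ZMod d) (ZMod d) ℂ) : ℝ := GX ρ + GP ρ

end


noncomputable section AuxProofs

open Finset

lemma aux_gauss (n : ℕ) : (∑ i ∈ Finset.range n, (i + 1)) * 2 = n * (n + 1) := by
  induction n with
  | zero => simp
  | succ n ih => rw [Finset.sum_range_succ, add_mul, ih]; ring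

lemma lorenzF_nonneg {n : ℕ} {p : Fin n → ℝ} (hp : ∀ i, 0 ≤ p i) (ℓ : Fin n) :
    0 ≤ lorenzF p ℓ := Finset.sum_nonneg fun _ _ => hp _

lemma lorenzF_last {m : ℕ} (p : Fin (m + 1) → ℝ) :
    lorenzF p (Fin.last m) = ∑ i, p i := by
  have h : Finset.Iic (Fin.last m) = Finset.univ := by
    ext k; simp [Fin.le_last]
  rw [lorenzF, h]
  exact Equiv.sum_comp (Tuple.sort p) p

lemma one_le_sum_lorenzF {m : ℕ} {p : Fin (m + 1) → ℝ} (hp : ∀ i, 0 ≤ p i)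
    (hs : ∑ i, p i = 1) : 1 ≤ ∑ ℓ, lorenzF p ℓ := by
  calc (1 : ℝ) = lorenzF p (Fin.last m) := by rw [lorenzF_last, hs]
  _ ≤ ∑ ℓ, lorenzF p ℓ :=
      Finset.single_le_sum (fun ℓ _ => lorenzF_nonneg hp ℓ) (Finset.mem_univ _)

lemma giniF_le {m : ℕ} {p : Fin (m + 1) → ℝ} (hp : ∀ i, 0 ≤ p i)
    (hs : ∑ i, p i = 1) :
    giniF p ≤ (((m + 1 : ℕ) : ℝ) - 1) / (((m + 1 : ℕ) : ℝ) + 1) := by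
  have h := one_le_sum_lorenzF hp hs
  rw [giniF]
  have hm : (0 : ℝ) < (m : ℝ) + 1 + 1 := by positivity
  have hc : (0 : ℝ) < 2 / ((m : ℝ) + 1 + 1) := by positivity
  push_cast
  have hid : ((m : ℝ) + 1 - 1) / ((m : ℝ) + 1 + 1)
      = 1 - 2 / ((m : ℝ) + 1 + 1) := by
    field_simp
    ring
  rw [hid]
  nlinarith [mul_le_mul_of_nonneg_left h hc.le]

lemma pointmass_of_giniF_eq {m : ℕ} {p : Fin (m + 1) → ℝ} (hp : ∀ i, 0 ≤ p i)
    (hs : ∑ i, p i = 1)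
    (h : giniF p = (((m + 1 : ℕ) : ℝ) - 1) / (((m + 1 : ℕ) : ℝ) + 1)) :
    ∃ j, ∀ i, p i = if i = j then 1 else 0 := by
  have hc : (0 : ℝ) < 2 / ((m : ℝ) + 1 + 1) := by positivity
  have hid : (((m + 1 : ℕ) : ℝ) - 1) / (((m + 1 : ℕ) : ℝ) + 1)
      = 1 - 2 / ((m : ℝ) + 1 + 1) := by
    push_cast
    field_simp
    ring
  rw [giniF, hid] at h
  push_cast at h
  have hS : ∑ ℓ, lorenzF p ℓ = 1 := by
    have h2 : 2 / ((m : ℝ) + 1 + 1) * (∑ ℓ, lorenzF p ℓ) = 2 / ((m : ℝ) + 1 + 1) * 1 := by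
      linarith
    exact mul_left_cancel₀ hc.ne' h2
  set σ := Tuple.sort p with hσ
  have hsplit := Finset.add_sum_erase Finset.univ (lorenzF p) (Finset.mem_univ (Fin.last m))
  have hlast : lorenzF p (Fin.last m) = 1 := by rw [lorenzF_last, hs]
  have hrest : ∑ ℓ ∈ Finset.univ.erase (Fin.last m), lorenzF p ℓ = 0 := by
    rw [hlast, hS] at hsplit; linarith
  have hzero : ∀ ℓ ∈ Finset.univ.erase (Fin.last m), lorenzF p ℓ = 0 :=
    (Finset.sum_eq_zero_iff_of_nonneg (fun ℓ _ => lorenzF_nonneg hp ℓ)).mp hrest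
  have hpk : ∀ k : Fin (m + 1), k ≠ Fin.last m → p (σ k) = 0 := by
    intro k hk
    have h0 : lorenzF p k = 0 := hzero k (Finset.mem_erase.mpr ⟨hk, Finset.mem_univ _⟩)
    have h1 : p (σ k) ≤ lorenzF p k :=
      Finset.single_le_sum (f := fun j => p (σ j)) (fun j _ => hp _)
        (Finset.mem_Iic.mpr le_rfl)
    have h2 := hp (σ k)
    linarith
  refine ⟨σ (Fin.last m), fun i => ?_⟩
  by_cases hi : i = σ (Fin.last m)
  · rw [if_pos hi, hi]
    have hsum : ∑ k, p (σ k) = 1 := by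
      rw [Equiv.sum_comp σ p]; exact hs
    have := Finset.add_sum_erase Finset.univ (fun k => p (σ k)) (Finset.mem_univ (Fin.last m))
    have hz : ∑ k ∈ Finset.univ.erase (Fin.last m), p (σ k) = 0 :=
      Finset.sum_eq_zero fun k hk => hpk k (Finset.mem_erase.mp hk).1
    rw [hz] at this
    simp only [add_zero] at this
    rw [this, hsum]
  · rw [if_neg hi]
    have hk : σ.symm i ≠ Fin.last m := by
      intro hc'
      apply hi
      rw [← hc', Equiv.apply_symm_apply]
    have := hpk _ hk
    rwa [Equiv.apply_symm_apply] at this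

lemma giniF_const {m : ℕ} : giniF (fun _ : Fin (m + 1) => 1 / ((m : ℝ) + 1)) = 0 := by
  have hl : ∀ ℓ : Fin (m + 1),
      lorenzF (fun _ : Fin (m + 1) => 1 / ((m : ℝ) + 1)) ℓ
        = ((ℓ : ℕ) + 1 : ℝ) * (1 / ((m : ℝ) + 1)) := by
    intro ℓ
    rw [lorenzF, Finset.sum_const, Fin.card_Iic, nsmul_eq_mul]
    push_cast; ring
  rw [giniF]
  rw [Finset.sum_congr rfl fun ℓ _ => hl ℓ]
  rw [← Finset.sum_mul]
  have hsum : ∑ ℓ : Fin (m + 1), ((ℓ : ℕ) + 1 : ℝ) = ((m + 1) * (m + 2) : ℕ) / 2 := by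
    rw [Fin.sum_univ_eq_sum_range (fun j => ((j : ℝ) + 1))]
    have := aux_gauss (m + 1)
    have hcast : ((∑ i ∈ Finset.range (m + 1), (i + 1) : ℕ) : ℝ)
        = ∑ j ∈ Finset.range (m + 1), ((j : ℝ) + 1) := by push_cast; rfl
    have h2 : ((∑ i ∈ Finset.range (m + 1), (i + 1) : ℕ) : ℝ) * 2
        = (((m + 1) * (m + 2) : ℕ) : ℝ) := by exact_mod_cast congrArg (Nat.cast : ℕ → ℝ) this
    rw [hcast] at h2
    linarith
  rw [hsum]
  have hm1 : ((m : ℝ) + 1) ≠ 0 := by positivity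
  have hm2 : ((m : ℝ) + 2) ≠ 0 := by positivity
  push_cast
  field_simp
  ring

/-- The canonical equivalence `Fin d ≃ ZMod d`. -/
def zEquiv (d : ℕ) [NeZero d] : Fin d ≃ ZMod d where
  toFun k := ((k : ℕ) : ZMod d)
  invFun x := ⟨x.val, ZMod.val_lt x⟩
  left_inv k := by
    ext
    exact ZMod.val_cast_of_lt k.isLt
  right_inv x := ZMod.natCast_rightInverse x

lemma gini_eq_giniF {d : ℕ} [NeZero d] (p : ZMod d → ℝ) :
    gini p = giniF (fun k : Fin d => p (zEquiv d k)) := rfl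

lemma sum_zEquiv {d : ℕ} [NeZero d] (p : ZMod d → ℝ) :
    ∑ k : Fin d, p (zEquiv d k) = ∑ x, p x := Equiv.sum_comp _ _

section Matrices

variable {d : ℕ} [NeZero d]

lemma diag_conjTranspose_mul (B : Matrix (ZMod d) (ZMod d) ℂ) (s : ZMod d) :
    (Bᴴ * B) s s = ((∑ k, Complex.normSq (B k s) : ℝ) : ℂ) := by
  rw [Matrix.mul_apply]
  push_cast
  refine Finset.sum_congr rfl fun k _ => ?_
  rw [Matrix.conjTranspose_apply]
  rw [mul_comm]
  exact Complex.mul_conj _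

lemma diag_re_nonneg {ρ : Matrix (ZMod d) (ZMod d) ℂ} (h : ρ.PosSemidef) (s : ZMod d) :
    0 ≤ (ρ s s).re := by
  obtain ⟨B, rfl⟩ := (show ∃ B : Matrix (ZMod d) (ZMod d) ℂ, ρ = Bᴴ * B by
    open scoped MatrixOrder in exact CStarAlgebra.nonneg_iff_eq_star_mul_self.mp h.nonneg)
  rw [diag_conjTranspose_mul, Complex.ofReal_re]
  exact Finset.sum_nonneg fun k _ => Complex.normSq_nonneg _

lemma entries_zero_of_diag_zero {ρ : Matrix (ZMod d) (ZMod d) ℂ} (h : ρ.PosSemidef)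
    {s : ZMod d} (hs : (ρ s s).re = 0) (a b : ZMod d) (hab : a = s ∨ b = s) :
    ρ a b = 0 := by
  obtain ⟨B, rfl⟩ := (show ∃ B : Matrix (ZMod d) (ZMod d) ℂ, ρ = Bᴴ * B by
    open scoped MatrixOrder in exact CStarAlgebra.nonneg_iff_eq_star_mul_self.mp h.nonneg)
  have hcol : ∀ k, B k s = 0 := by
    have h0 : ∑ k, Complex.normSq (B k s) = 0 := by
      have := diag_conjTranspose_mul B s
      rw [this, Complex.ofReal_re] at hs
      exact hs
    intro k
    have := (Finset.sum_eq_zero_iff_of_nonneg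
      (fun k _ => Complex.normSq_nonneg (B k s))).mp h0 k (Finset.mem_univ k)
    exact Complex.normSq_eq_zero.mp this
  rcases hab with rfl | rfl
  · rw [Matrix.mul_apply]
    refine Finset.sum_eq_zero fun k _ => ?_
    rw [Matrix.conjTranspose_apply, hcol k]
    simp
  · rw [Matrix.mul_apply]
    refine Finset.sum_eq_zero fun k _ => ?_
    rw [hcol k]
    simp

lemma omega_pow_d {d : ℕ} [NeZero d] : omega d ^ d = 1 :=
  (Complex.isPrimitiveRoot_exp d (NeZero.ne d)).pow_eq_one

lemma omega_pow_mod {d : ℕ} [NeZero d] (n : ℕ) : omega d ^ (n % d) = omega d ^ n := by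
  conv_rhs => rw [← Nat.div_add_mod n d]
  rw [pow_add, pow_mul, omega_pow_d, one_pow, one_mul]

lemma omega_ne_zero {d : ℕ} : omega d ≠ 0 := Complex.exp_ne_zero _

lemma omega_abs {d : ℕ} : ‖omega d‖ = 1 := by
  rw [omega, Complex.norm_exp]
  have : (2 * (Real.pi : ℂ) * Complex.I / (d : ℂ)).re = 0 := by
    simp [Complex.div_re]
  rw [this, Real.exp_zero]

lemma omega_conj {d : ℕ} : (starRingEnd ℂ) (omega d) = (omega d)⁻¹ :=
  (Complex.inv_eq_conj omega_abs).symm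

lemma Fmat_mul_conjTranspose : Fmat d * (Fmat d)ᴴ = 1 := by
  have hd0 : (d : ℝ) ≠ 0 := Nat.cast_ne_zero.mpr (NeZero.ne d)
  have hdpos : (0 : ℝ) < d := Nat.cast_pos.mpr (Nat.pos_of_ne_zero (NeZero.ne d))
  have hprim := Complex.isPrimitiveRoot_exp d (NeZero.ne d)
  have hsqrt : ((Real.sqrt d : ℂ)) * ((Real.sqrt d : ℂ)) = (d : ℂ) := by
    rw [← Complex.ofReal_mul, Real.mul_self_sqrt hdpos.le]
    norm_cast
  ext a b
  rw [Matrix.mul_apply]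
  have hterm : ∀ s : ZMod d,
      Fmat d a s * (Fmat d)ᴴ s b
        = (omega d ^ a.val * (omega d ^ b.val)⁻¹) ^ s.val / (d : ℂ) := by
    intro s
    rw [Matrix.conjTranspose_apply]
    show (omega d ^ (a * s).val / (Real.sqrt d : ℂ))
        * (starRingEnd ℂ) (omega d ^ (b * s).val / (Real.sqrt d : ℂ)) = _
    rw [map_div₀, map_pow, omega_conj, Complex.conj_ofReal]
    have h1 : omega d ^ (a * s).val = (omega d ^ a.val) ^ s.val := by
      rw [ZMod.val_mul, omega_pow_mod, pow_mul]
    have h2 : ((omega d)⁻¹) ^ (b * s).val = ((omega d ^ b.val)⁻¹) ^ s.val := by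
      rw [inv_pow, inv_pow, ← pow_mul, ZMod.val_mul, omega_pow_mod]
    rw [h1, h2, div_mul_div_comm, hsqrt, ← mul_pow]
  rw [Finset.sum_congr rfl fun s _ => hterm s]
  rw [← Finset.sum_div]
  have hreindex : ∑ s : ZMod d, (omega d ^ a.val * (omega d ^ b.val)⁻¹) ^ s.val
      = ∑ j ∈ Finset.range d, (omega d ^ a.val * (omega d ^ b.val)⁻¹) ^ j := by
    rw [← Equiv.sum_comp (zEquiv d)
      (fun s : ZMod d => (omega d ^ a.val * (omega d ^ b.val)⁻¹) ^ s.val)]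
    rw [← Fin.sum_univ_eq_sum_range]
    refine Finset.sum_congr rfl fun k _ => ?_
    congr 1
    exact ZMod.val_cast_of_lt k.isLt
  rw [hreindex]
  by_cases hab : a = b
  · subst hab
    rw [mul_inv_cancel₀ (pow_ne_zero _ omega_ne_zero)]
    have hone : ∑ j ∈ Finset.range d, (1 : ℂ) ^ j = (d : ℂ) := by simp
    rw [hone, Matrix.one_apply_eq]
    exact div_self (Nat.cast_ne_zero.mpr (NeZero.ne d))
  · have hx1 : omega d ^ a.val * (omega d ^ b.val)⁻¹ ≠ 1 := by
      intro hc
      apply hab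
      have : omega d ^ a.val = omega d ^ b.val :=
        (mul_inv_eq_one₀ (pow_ne_zero _ omega_ne_zero)).mp hc
      exact ZMod.val_injective d (hprim.pow_inj (ZMod.val_lt a) (ZMod.val_lt b) this)
    have hxd : (omega d ^ a.val * (omega d ^ b.val)⁻¹) ^ d = 1 := by
      rw [mul_pow, ← pow_mul, mul_comm a.val d, pow_mul, omega_pow_d, one_pow,
        inv_pow, ← pow_mul, mul_comm b.val d, pow_mul, omega_pow_d, one_pow]
      simp
    rw [geom_sum_eq hx1, hxd]
    simp [Matrix.one_apply, hab]

lemma sum_PX {ρ : Matrix (ZMod d) (ZMod d) ℂ} (hρ : IsDensityMatrix ρ) :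
    ∑ x, PX ρ x = 1 := by
  have : ∑ x, PX ρ x = (ρ.trace).re := by
    rw [Matrix.trace, Complex.re_sum]
    rfl
  rw [this, hρ.2, Complex.one_re]

lemma PP_posSemidef {ρ : Matrix (ZMod d) (ZMod d) ℂ} (hρ : IsDensityMatrix ρ) :
    ((Fmat d)ᴴ * ρ * Fmat d).PosSemidef :=
  hρ.1.conjTranspose_mul_mul_same (Fmat d)

lemma sum_PP {ρ : Matrix (ZMod d) (ZMod d) ℂ} (hρ : IsDensityMatrix ρ) :
    ∑ x, PP ρ x = 1 := by
  have htr : ((Fmat d)ᴴ * ρ * Fmat d).trace = 1 := by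
    rw [Matrix.trace_mul_comm, ← Matrix.mul_assoc, Fmat_mul_conjTranspose, Matrix.one_mul, hρ.2]
  have : ∑ x, PP ρ x = (((Fmat d)ᴴ * ρ * Fmat d).trace).re := by
    rw [Matrix.trace, Complex.re_sum]
    rfl
  rw [this, htr, Complex.one_re]

end Matrices

section MainLemmas

variable {m : ℕ}

lemma GX_le (ρ : Matrix (ZMod (m + 1)) (ZMod (m + 1)) ℂ) (hρ : IsDensityMatrix ρ) :
    GX ρ ≤ (((m + 1 : ℕ) : ℝ) - 1) / (((m + 1 : ℕ) : ℝ) + 1) := by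
  rw [GX, gini_eq_giniF]
  exact giniF_le (fun k => diag_re_nonneg hρ.1 _)
    ((Equiv.sum_comp (zEquiv (m + 1)) (PX ρ)).trans (sum_PX hρ))

lemma GP_le (ρ : Matrix (ZMod (m + 1)) (ZMod (m + 1)) ℂ) (hρ : IsDensityMatrix ρ) :
    GP ρ ≤ (((m + 1 : ℕ) : ℝ) - 1) / (((m + 1 : ℕ) : ℝ) + 1) := by
  rw [GP, gini_eq_giniF]
  exact giniF_le (fun k => diag_re_nonneg (PP_posSemidef hρ) _)
    ((Equiv.sum_comp (zEquiv (m + 1)) (PP ρ)).trans (sum_PP hρ))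

lemma GP_eq_zero_of_GX_max (ρ : Matrix (ZMod (m + 1)) (ZMod (m + 1)) ℂ)
    (hρ : IsDensityMatrix ρ)
    (hX : GX ρ = (((m + 1 : ℕ) : ℝ) - 1) / (((m + 1 : ℕ) : ℝ) + 1)) :
    GP ρ = 0 := by
  -- PX is a point mass
  rw [GX, gini_eq_giniF] at hX
  obtain ⟨j, hj⟩ := pointmass_of_giniF_eq (fun k => diag_re_nonneg hρ.1 _)
    ((Equiv.sum_comp (zEquiv (m + 1)) (PX ρ)).trans (sum_PX hρ)) hX
  set r : ZMod (m + 1) := zEquiv (m + 1) j with hr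
  have hPX : ∀ x : ZMod (m + 1), PX ρ x = if x = r then 1 else 0 := by
    intro x
    have := hj ((zEquiv (m + 1)).symm x)
    rw [Equiv.apply_symm_apply] at this
    show (ρ x x).re = _
    rw [this]
    by_cases hx : x = r
    · rw [if_pos hx, if_pos]
      rw [hx, hr, Equiv.symm_apply_apply]
    · rw [if_neg hx, if_neg]
      intro hc
      exact hx (by rw [← Equiv.apply_symm_apply (zEquiv (m + 1)) x, hc, ← hr])
  -- off-point entries vanish
  have hzero : ∀ a b : ZMod (m + 1), a ≠ r ∨ b ≠ r → ρ a b = 0 := by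
    intro a b hab
    rcases hab with ha | hb
    · exact entries_zero_of_diag_zero hρ.1
        (by have := hPX a; rw [if_neg ha] at this; exact this) a b (Or.inl rfl)
    · exact entries_zero_of_diag_zero hρ.1
        (by have := hPX b; rw [if_neg hb] at this; exact this) a b (Or.inr rfl)
  have hrr : ρ r r = 1 := by
    have htr := hρ.2
    rw [Matrix.trace] at htr
    have : ∑ x : ZMod (m + 1), ρ.diag x = ρ r r := by
      refine Finset.sum_eq_single r (fun x _ hx => ?_) (fun h => absurd (Finset.mem_univ r) h)
      exact hzero x x (Or.inl hx)
    rw [this] at htr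
    exact htr
  -- PP is uniform
  have hPP : ∀ s : ZMod (m + 1), PP ρ s = 1 / ((m : ℝ) + 1) := by
    intro s
    rw [PP]
    have hent : ((Fmat (m + 1))ᴴ * ρ * Fmat (m + 1)) s s
        = (starRingEnd ℂ) (Fmat (m + 1) r s) * Fmat (m + 1) r s := by
      rw [Matrix.mul_apply]
      rw [Finset.sum_eq_single r]
      · rw [Matrix.mul_apply, Finset.sum_eq_single r]
        · rw [Matrix.conjTranspose_apply, hrr, mul_one]
          rfl
        · intro a _ ha
          rw [hzero a r (Or.inl ha), mul_zero]
        · intro h; exact absurd (Finset.mem_univ r) h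
      · intro b _ hb
        have : ((Fmat (m + 1))ᴴ * ρ) s b = 0 := by
          rw [Matrix.mul_apply]
          refine Finset.sum_eq_zero fun a _ => ?_
          rw [hzero a b (Or.inr hb), mul_zero]
        rw [this, zero_mul]
      · intro h; exact absurd (Finset.mem_univ r) h
    rw [hent, mul_comm, Complex.mul_conj]
    have hns : Complex.normSq (Fmat (m + 1) r s) = 1 / ((m : ℝ) + 1) := by
      show Complex.normSq (omega (m + 1) ^ (r * s).val / (Real.sqrt ((m + 1 : ℕ) : ℝ) : ℂ))
          = 1 / ((m : ℝ) + 1)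
      rw [Complex.normSq_div, Complex.normSq_eq_norm_sq, Complex.normSq_eq_norm_sq, norm_pow,
        omega_abs, one_pow, Complex.norm_real, Real.norm_eq_abs, abs_of_nonneg (Real.sqrt_nonneg _),
        Real.sq_sqrt (by positivity : (0 : ℝ) ≤ ((m + 1 : ℕ) : ℝ))]
      push_cast
      norm_num
    rw [hns, Complex.ofReal_re]
  have huni : PP ρ = fun _ => 1 / ((m : ℝ) + 1) := funext hPP
  rw [GP, gini_eq_giniF, huni]
  exact giniF_const

end MainLemmas

end AuxProofs

/-- For every density matrix `ρ` it is impossible that both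
`G_X(ρ) = (d − 1)/(d + 1)` and `G_P(ρ) = (d − 1)/(d + 1)`; consequently every density matrix
satisfies `G_XP(ρ) < 2(d − 1)/(d + 1)`. -/
theorem not_GX_and_GP_max {d : ℕ} [NeZero d] (hd : 2 ≤ d)
    (ρ : Matrix (ZMod d) (ZMod d) ℂ) (hρ : IsDensityMatrix ρ) :
    ¬(GX ρ = ((d : ℝ) - 1) / ((d : ℝ) + 1) ∧ GP ρ = ((d : ℝ) - 1) / ((d : ℝ) + 1)) ∧
    GXP ρ < 2 * (((d : ℝ) - 1) / ((d : ℝ) + 1)) := by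
  obtain ⟨m, rfl⟩ : ∃ m, d = m + 1 := ⟨d - 1, (Nat.succ_pred_eq_of_pos (by omega)).symm⟩
  have hMpos : (0 : ℝ) < (((m + 1 : ℕ) : ℝ) - 1) / (((m + 1 : ℕ) : ℝ) + 1) := by
    have hm : 1 ≤ m := by omega
    have h1 : (1 : ℝ) ≤ (m : ℝ) := by exact_mod_cast hm
    push_cast
    apply div_pos <;> linarith
  have hnot : ¬(GX ρ = (((m + 1 : ℕ) : ℝ) - 1) / (((m + 1 : ℕ) : ℝ) + 1) ∧
      GP ρ = (((m + 1 : ℕ) : ℝ) - 1) / (((m + 1 : ℕ) : ℝ) + 1)) := by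
    rintro ⟨hX, hP⟩
    rw [GP_eq_zero_of_GX_max ρ hρ hX] at hP
    linarith
  refine ⟨hnot, ?_⟩
  have h1 := GX_le ρ hρ
  have h2 := GP_le ρ hρ
  rw [GXP]
  rcases lt_or_eq_of_le h1 with h | h
  · linarith
  · have h3 : GP ρ < (((m + 1 : ℕ) : ℝ) - 1) / (((m + 1 : ℕ) : ℝ) + 1) := by
      rcases lt_or_eq_of_le h2 with h' | h'
      · exact h'
      · exact absurd ⟨h, h'⟩ hnot
    linarith
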